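/- Let ℒ_u(θ) = E_{z∼q_u}[ℓ_θ(x_u, z)] with gradient g_u(θ), and suppose z ↦ ∇_θℓ_θ(x,z) is L-Lipschitz uniformly in x. Define Δ(u,v) = ‖E_{q_v}[∇_θℓ_θ(x_u,z) − ∇_θℓ_θ(x_v,z)]‖. Then ‖g_v(θ) − g_u(θ)‖ ≤ Δ(u,v) + L·W₁(q_u, q_v), and consequently −⟨g_u, g_v⟩ ≤ −‖g_u‖² + ‖g_u‖(Δ(u,v) + L·W₁(q_u, q_v)). In particular the first-order SGD descent coefficient is strictly negative whenever W₁(q_u, q_v) < (‖g_u(θ)‖ − Δ(u,v))/L. -/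

import Mathlib

open MeasureTheory

/-- The 1-Wasserstein distance (Euclidean cost), defined as the infimum over couplings
of the expected distance. -/
noncomputable def W1 {X : Type*} [MeasurableSpace X] [PseudoMetricSpace X]
    (μ ν : Measure X) : ℝ :=
  sInf {c : ℝ | ∃ π : Measure (X × X), IsProbabilityMeasure π ∧
    π.map Prod.fst = μ ∧ π.map Prod.snd = ν ∧ c = ∫ p, dist p.1 p.2 ∂π}

/-- A Lipschitz function is integrable against a probability measure with integrable norm. -/
lemma lipschitz_integrable {d p : ℕ} (L : NNReal)
    (G : EuclideanSpace ℝ (Fin d) → EuclideanSpace ℝ (Fin p))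
    (hG : LipschitzWith L G) (μ : Measure (EuclideanSpace ℝ (Fin d)))
    [IsProbabilityMeasure μ] (hμ : Integrable (fun z => ‖z‖) μ) : Integrable G μ := by
  have h : Integrable (fun z => ‖G 0‖ + (L : ℝ) * ‖z‖) μ :=
    (integrable_const _).add (hμ.const_mul _)
  refine h.mono' hG.continuous.aestronglyMeasurable ?_
  filter_upwards with z
  have h1 : dist (G z) (G 0) ≤ (L : ℝ) * dist z 0 := hG.dist_le_mul z 0
  have h2 : ‖G z‖ ≤ ‖G 0‖ + dist (G z) (G 0) := by
    rw [dist_eq_norm]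
    have hz : G 0 + (G z - G 0) = G z := by abel
    calc ‖G z‖ = ‖G 0 + (G z - G 0)‖ := by rw [hz]
    _ ≤ ‖G 0‖ + ‖G z - G 0‖ := norm_add_le _ _
  calc ‖G z‖ ≤ ‖G 0‖ + dist (G z) (G 0) := h2
  _ ≤ ‖G 0‖ + (L : ℝ) * dist z 0 := by linarith
  _ = ‖G 0‖ + (L : ℝ) * ‖z‖ := by rw [dist_zero_right]

/-- **Gradient proximity and sharing radius.** Fix `θ`; let `Gu z = ∇_θℓ_θ(x_u, z)` and
`Gv z = ∇_θℓ_θ(x_v, z)`, both `L`-Lipschitz in `z` (Lipschitz uniformly in `x`), and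
let `g_u = E_{q_u}[Gu]`, `g_v = E_{q_v}[Gv]`, `Δ(u,v) = ‖E_{q_v}[Gu - Gv]‖`. Then
`‖g_v - g_u‖ ≤ Δ(u,v) + L·W₁(q_u, q_v)`, hence
`-⟨g_u, g_v⟩ ≤ -‖g_u‖² + ‖g_u‖(Δ(u,v) + L·W₁(q_u, q_v))`, and the first-order descent
coefficient is strictly negative (i.e. `⟨g_u, g_v⟩ > 0`) whenever
`W₁(q_u, q_v) < (‖g_u‖ - Δ(u,v))/L`. -/
theorem sharing_radius_gradient_bound
    (d p : ℕ) (L : NNReal) (hL : 0 < (L : ℝ))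
    (Gu Gv : EuclideanSpace ℝ (Fin d) → EuclideanSpace ℝ (Fin p))
    (hGu : LipschitzWith L Gu) (hGv : LipschitzWith L Gv)
    (qu qv : Measure (EuclideanSpace ℝ (Fin d)))
    [IsProbabilityMeasure qu] [IsProbabilityMeasure qv]
    (hqu : Integrable (fun z => ‖z‖) qu) (hqv : Integrable (fun z => ‖z‖) qv) :
    (‖(∫ z, Gv z ∂qv) - ∫ z, Gu z ∂qu‖
        ≤ ‖∫ z, (Gu z - Gv z) ∂qv‖ + (L : ℝ) * W1 qu qv)
    ∧ (-(inner ℝ (∫ z, Gu z ∂qu) (∫ z, Gv z ∂qv) : ℝ)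
        ≤ -‖∫ z, Gu z ∂qu‖ ^ 2
          + ‖∫ z, Gu z ∂qu‖ * (‖∫ z, (Gu z - Gv z) ∂qv‖ + (L : ℝ) * W1 qu qv))
    ∧ (W1 qu qv < (‖∫ z, Gu z ∂qu‖ - ‖∫ z, (Gu z - Gv z) ∂qv‖) / (L : ℝ) →
        0 < (inner ℝ (∫ z, Gu z ∂qu) (∫ z, Gv z ∂qv) : ℝ)) := by
  set S := {c : ℝ | ∃ π : Measure ((EuclideanSpace ℝ (Fin d)) × (EuclideanSpace ℝ (Fin d))),
    IsProbabilityMeasure π ∧ π.map Prod.fst = qu ∧ π.map Prod.snd = qv ∧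
    c = ∫ p, dist p.1 p.2 ∂π} with hS
  have hW1 : W1 qu qv = sInf S := rfl
  -- nonemptiness of S via the product coupling
  have hne : S.Nonempty := by
    refine ⟨∫ p, dist p.1 p.2 ∂(qu.prod qv), qu.prod qv, inferInstance, ?_, ?_, rfl⟩
    · show (qu.prod qv).fst = qu
      exact Measure.fst_prod
    · show (qu.prod qv).snd = qv
      exact Measure.snd_prod
  -- integrability facts
  have intGu_u : Integrable Gu qu := lipschitz_integrable L Gu hGu qu hqu
  have intGu_v : Integrable Gu qv := lipschitz_integrable L Gu hGu qv hqv
  have intGv_v : Integrable Gv qv := lipschitz_integrable L Gv hGv qv hqv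
  -- every element of S is nonneg
  have hSnonneg : ∀ c ∈ S, (0:ℝ) ≤ c := by
    rintro c ⟨π, hπ, h1, h2, rfl⟩
    exact integral_nonneg fun p => dist_nonneg
  have hW1nonneg : 0 ≤ W1 qu qv := le_csInf hne hSnonneg
  -- key Wasserstein bound
  have key : ‖(∫ z, Gu z ∂qv) - ∫ z, Gu z ∂qu‖ ≤ (L : ℝ) * W1 qu qv := by
    have hbd : ∀ c ∈ S, ‖(∫ z, Gu z ∂qv) - ∫ z, Gu z ∂qu‖ / (L : ℝ) ≤ c := by
      rintro c ⟨π, hπ, hfst, hsnd, rfl⟩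
      rw [div_le_iff₀ hL]
      -- transfer integrals to π
      have hGm := hGu.continuous.aestronglyMeasurable
        (μ := (π.map Prod.fst : Measure (EuclideanSpace ℝ (Fin d))))
      have i1 : Integrable (fun q : _ × _ => Gu q.1) π := by
        have : Integrable Gu (π.map Prod.fst) := hfst ▸ intGu_u
        exact (integrable_map_measure hGu.continuous.aestronglyMeasurable
          measurable_fst.aemeasurable).mp this
      have i2 : Integrable (fun q : _ × _ => Gu q.2) π := by
        have : Integrable Gu (π.map Prod.snd) := hsnd ▸ intGu_v
        exact (integrable_map_measure hGu.continuous.aestronglyMeasurable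
          measurable_snd.aemeasurable).mp this
      have e1 : ∫ z, Gu z ∂qu = ∫ q, Gu q.1 ∂π := by
        rw [← hfst, integral_map measurable_fst.aemeasurable
          hGu.continuous.aestronglyMeasurable]
      have e2 : ∫ z, Gu z ∂qv = ∫ q, Gu q.2 ∂π := by
        rw [← hsnd, integral_map measurable_snd.aemeasurable
          hGu.continuous.aestronglyMeasurable]
      rw [e1, e2, ← integral_sub i2 i1]
      have hdint : Integrable (fun q : _ × _ => (L : ℝ) * dist q.1 q.2) π := by
        have idist : Integrable (fun q : _ × _ => dist q.1 q.2) π := by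
          have j1 : Integrable (fun q : _ × _ => ‖q.1‖) π := by
            have : Integrable (fun z => ‖z‖) (π.map Prod.fst) := hfst ▸ hqu
            exact (integrable_map_measure (continuous_norm.aestronglyMeasurable)
              measurable_fst.aemeasurable).mp this
          have j2 : Integrable (fun q : _ × _ => ‖q.2‖) π := by
            have : Integrable (fun z => ‖z‖) (π.map Prod.snd) := hsnd ▸ hqv
            exact (integrable_map_measure (continuous_norm.aestronglyMeasurable)
              measurable_snd.aemeasurable).mp this
          refine (j1.add j2).mono' ?_ ?_
          · exact (continuous_fst.dist continuous_snd).aestronglyMeasurable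
          · filter_upwards with q
            simp only [Pi.add_apply, Real.norm_eq_abs, abs_dist]
            calc dist q.1 q.2 ≤ dist q.1 0 + dist 0 q.2 := dist_triangle _ _ _
            _ = ‖q.1‖ + ‖q.2‖ := by rw [dist_zero_right, dist_comm, dist_zero_right]
        exact idist.const_mul _
      calc ‖∫ q, (Gu q.2 - Gu q.1) ∂π‖ ≤ ∫ q, ‖Gu q.2 - Gu q.1‖ ∂π :=
            norm_integral_le_integral_norm _
      _ ≤ ∫ q, (L : ℝ) * dist q.1 q.2 ∂π := by
            refine integral_mono_of_nonneg (Filter.Eventually.of_forall fun q => norm_nonneg _)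
              hdint ?_
            filter_upwards with q
            have := hGu.dist_le_mul q.2 q.1
            rw [dist_eq_norm] at this
            calc ‖Gu q.2 - Gu q.1‖ ≤ (L : ℝ) * dist q.2 q.1 := this
            _ = (L : ℝ) * dist q.1 q.2 := by rw [dist_comm]
      _ = (L : ℝ) * ∫ q, dist q.1 q.2 ∂π := integral_const_mul _ _
      _ = (∫ p', dist p'.1 p'.2 ∂π) * (L : ℝ) := mul_comm _ _
    have : ‖(∫ z, Gu z ∂qv) - ∫ z, Gu z ∂qu‖ / (L : ℝ) ≤ sInf S := le_csInf hne hbd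
    rw [div_le_iff₀ hL] at this
    rw [hW1]
    linarith [this]
  -- main bound
  set gu := ∫ z, Gu z ∂qu with hgu
  set gv := ∫ z, Gv z ∂qv with hgv
  set Δ := ‖∫ z, (Gu z - Gv z) ∂qv‖ with hΔ
  have hsplit : gv - gu = -(∫ z, (Gu z - Gv z) ∂qv) + ((∫ z, Gu z ∂qv) - gu) := by
    rw [integral_sub intGu_v intGv_v]
    abel
  have main : ‖gv - gu‖ ≤ Δ + (L : ℝ) * W1 qu qv := by
    rw [hsplit]
    calc ‖-(∫ z, (Gu z - Gv z) ∂qv) + ((∫ z, Gu z ∂qv) - gu)‖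
        ≤ ‖-(∫ z, (Gu z - Gv z) ∂qv)‖ + ‖(∫ z, Gu z ∂qv) - gu‖ := norm_add_le _ _
    _ = Δ + ‖(∫ z, Gu z ∂qv) - gu‖ := by rw [norm_neg]
    _ ≤ Δ + (L : ℝ) * W1 qu qv := by linarith [key]
  refine ⟨main, ?_, ?_⟩
  · -- inner product bound
    have h1 : (inner ℝ gu gv : ℝ) = ‖gu‖ ^ 2 + inner ℝ gu (gv - gu) := by
      rw [inner_sub_right, real_inner_self_eq_norm_sq]; ring
    have h2 : |(inner ℝ gu (gv - gu) : ℝ)| ≤ ‖gu‖ * ‖gv - gu‖ := abs_real_inner_le_norm _ _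
    have h3 : -(inner ℝ gu (gv - gu) : ℝ) ≤ ‖gu‖ * ‖gv - gu‖ := by
      have := neg_abs_le (inner ℝ gu (gv - gu) : ℝ); linarith
    have h4 : ‖gu‖ * ‖gv - gu‖ ≤ ‖gu‖ * (Δ + (L : ℝ) * W1 qu qv) :=
      mul_le_mul_of_nonneg_left main (norm_nonneg _)
    rw [h1]
    linarith
  · intro hlt
    have hpos : 0 < (‖gu‖ - Δ) / (L : ℝ) := lt_of_le_of_lt hW1nonneg hlt
    have hgupos : Δ < ‖gu‖ := by
      have := (div_pos_iff.mp hpos)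
      rcases this with ⟨h, _⟩ | ⟨_, h⟩
      · linarith
      · linarith
    have hLW : (L : ℝ) * W1 qu qv < ‖gu‖ - Δ := by
      have := (lt_div_iff₀ hL).mp hlt
      linarith
    have hlt2 : ‖gv - gu‖ < ‖gu‖ := by linarith [main]
    have h1 : (inner ℝ gu gv : ℝ) = ‖gu‖ ^ 2 + inner ℝ gu (gv - gu) := by
      rw [inner_sub_right, real_inner_self_eq_norm_sq]; ring
    have h2 : |(inner ℝ gu (gv - gu) : ℝ)| ≤ ‖gu‖ * ‖gv - gu‖ := abs_real_inner_le_norm _ _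
    have h3 : -(‖gu‖ * ‖gv - gu‖) ≤ (inner ℝ gu (gv - gu) : ℝ) := by
      have := neg_abs_le (inner ℝ gu (gv - gu) : ℝ); linarith
    have hgu0 : 0 < ‖gu‖ := lt_of_le_of_lt (norm_nonneg _) hgupos |>.trans_le (le_refl _)
    have : ‖gu‖ * ‖gv - gu‖ < ‖gu‖ ^ 2 := by
      have := mul_lt_mul_of_pos_left hlt2 hgu0
      nlinarith
    rw [h1]
    linarith
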